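/- The function g : ℝ³ → ℝ given by g(x₁,x₂,x₃) = (1/2) ln( √(x₁² + x₂² + x₃²) + x₃ ) (the first coordinate of the inverse of the parabolic coordinate map) is harmonic on the open set { x ∈ ℝ³ : x₁² + x₂² > 0 }, i.e. its Laplacian ∂²g/∂x₁² + ∂²g/∂x₂² + ∂²g/∂x₃² vanishes there. -/

import Mathlib

open Real

lemma rho_pos {m c r : ℝ} (h : r^2 + m > 0) : 0 < Real.sqrt (r^2 + m + c^2) := by
  apply Real.sqrt_pos.2; nlinarith [sq_nonneg c]

lemma rho_add_pos {m c r : ℝ} (h : r^2 + m > 0) : 0 < Real.sqrt (r^2 + m + c^2) + c := by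
  have h3 : Real.sqrt (c^2) < Real.sqrt (r^2 + m + c^2) := by
    apply Real.sqrt_lt_sqrt (by positivity); nlinarith
  rw [Real.sqrt_sq_eq_abs] at h3
  cases abs_cases c with
  | inl hc => linarith [hc.1]
  | inr hc => linarith [hc.1]

lemma hd1 {m c : ℝ} (r : ℝ) (h : r^2 + m > 0) :
    HasDerivAt (fun r => (1/2) * Real.log (Real.sqrt (r^2 + m + c^2) + c))
      (r / (2 * Real.sqrt (r^2 + m + c^2) * (Real.sqrt (r^2 + m + c^2) + c))) r := by
  have hρ := rho_pos (c := c) h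
  have hρc := rho_add_pos (c := c) h
  have hq : HasDerivAt (fun r : ℝ => r^2 + m + c^2) (2*r) r := by
    simpa using ((hasDerivAt_pow 2 r).add_const m).add_const (c^2)
  have hne : r^2 + m + c^2 ≠ 0 := by nlinarith [sq_nonneg c]
  have hs : HasDerivAt (fun r : ℝ => Real.sqrt (r^2 + m + c^2))
      (1 / (2 * Real.sqrt (r^2+m+c^2)) * (2*r)) r :=
    (Real.hasDerivAt_sqrt hne).comp r hq
  have hsc : HasDerivAt (fun r : ℝ => Real.sqrt (r^2 + m + c^2) + c)
      (1 / (2 * Real.sqrt (r^2+m+c^2)) * (2*r)) r := hs.add_const c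
  have hl := hsc.log hρc.ne'
  have := hl.const_mul (1/2 : ℝ)
  refine this.congr_deriv (Eq.symm ?_)
  rw [div_eq_iff (by positivity)]
  generalize hg : Real.sqrt (r^2+m+c^2) = ρ at hρ hρc ⊢
  field_simp

lemma hd2 {m c : ℝ} (r : ℝ) (h : r^2 + m > 0) :
    HasDerivAt (fun r => r / (2 * Real.sqrt (r^2 + m + c^2) * (Real.sqrt (r^2 + m + c^2) + c)))
      ((2 * Real.sqrt (r^2+m+c^2)^2 * (Real.sqrt (r^2+m+c^2) + c)
          - 2 * r^2 * (2 * Real.sqrt (r^2+m+c^2) + c)) /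
        (Real.sqrt (r^2+m+c^2)
          * (2 * Real.sqrt (r^2+m+c^2) * (Real.sqrt (r^2+m+c^2) + c))^2)) r := by
  have hρ := rho_pos (c := c) h
  have hρc := rho_add_pos (c := c) h
  have hq : HasDerivAt (fun r : ℝ => r^2 + m + c^2) (2*r) r := by
    simpa using ((hasDerivAt_pow 2 r).add_const m).add_const (c^2)
  have hne : r^2 + m + c^2 ≠ 0 := by nlinarith [sq_nonneg c]
  have hs : HasDerivAt (fun r : ℝ => Real.sqrt (r^2 + m + c^2))
      (1 / (2 * Real.sqrt (r^2+m+c^2)) * (2*r)) r :=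
    (Real.hasDerivAt_sqrt hne).comp r hq
  have hD : HasDerivAt
      (fun r : ℝ => 2 * Real.sqrt (r^2 + m + c^2) * (Real.sqrt (r^2 + m + c^2) + c))
      (2 * (1 / (2 * Real.sqrt (r^2+m+c^2)) * (2*r)) * (Real.sqrt (r^2+m+c^2) + c)
        + 2 * Real.sqrt (r^2+m+c^2) * (1 / (2 * Real.sqrt (r^2+m+c^2)) * (2*r))) r :=
    (hs.const_mul 2).mul (hs.add_const c)
  have hDne : 2 * Real.sqrt (r^2+m+c^2) * (Real.sqrt (r^2+m+c^2) + c) ≠ 0 := by positivity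
  have := (hasDerivAt_id r).div hD hDne
  refine this.congr_deriv (Eq.symm ?_)
  rw [div_eq_div_iff (by positivity) (by positivity)]
  generalize hg : Real.sqrt (r^2+m+c^2) = ρ at hρ hρc ⊢
  field_simp
  simp only [id]; ring

lemma rho_add_pos' {k r : ℝ} (h : k > 0) : 0 < Real.sqrt (k + r^2) + r := by
  have h3 : Real.sqrt (r^2) < Real.sqrt (k + r^2) := by
    apply Real.sqrt_lt_sqrt (by positivity); nlinarith
  rw [Real.sqrt_sq_eq_abs] at h3
  cases abs_cases r with
  | inl hc => linarith [hc.1]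
  | inr hc => linarith [hc.1]

lemma hd1c {k : ℝ} (r : ℝ) (h : k > 0) :
    HasDerivAt (fun r => (1/2) * Real.log (Real.sqrt (k + r^2) + r))
      (1 / (2 * Real.sqrt (k + r^2))) r := by
  have hρ : 0 < Real.sqrt (k + r^2) := Real.sqrt_pos.2 (by positivity)
  have hρr := rho_add_pos' (r := r) h
  have hq : HasDerivAt (fun r : ℝ => k + r^2) (2*r) r := by
    simpa using (hasDerivAt_pow 2 r).const_add k
  have hne : k + r^2 ≠ 0 := by positivity
  have hs : HasDerivAt (fun r : ℝ => Real.sqrt (k + r^2))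
      (1 / (2 * Real.sqrt (k + r^2)) * (2*r)) r :=
    (Real.hasDerivAt_sqrt hne).comp r hq
  have hsr : HasDerivAt (fun r : ℝ => Real.sqrt (k + r^2) + r)
      (1 / (2 * Real.sqrt (k + r^2)) * (2*r) + 1) r := hs.add (hasDerivAt_id r)
  have hl := hsr.log hρr.ne'
  have := hl.const_mul (1/2 : ℝ)
  refine this.congr_deriv (Eq.symm ?_)
  have hsq : Real.sqrt (k + r^2)^2 = k + r^2 := Real.sq_sqrt (by positivity)
  generalize hg : Real.sqrt (k + r^2) = ρ at hρ hρr hsq ⊢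
  have hk : k = ρ^2 - r^2 := by linarith
  subst hk
  field_simp
  ring

lemma hd2c {k : ℝ} (r : ℝ) (h : k > 0) :
    HasDerivAt (fun r => 1 / (2 * Real.sqrt (k + r^2)))
      (-(r / (Real.sqrt (k + r^2)^3)) / 2) r := by
  have hρ : 0 < Real.sqrt (k + r^2) := Real.sqrt_pos.2 (by positivity)
  have hq : HasDerivAt (fun r : ℝ => k + r^2) (2*r) r := by
    simpa using (hasDerivAt_pow 2 r).const_add k
  have hne : k + r^2 ≠ 0 := by positivity
  have hs : HasDerivAt (fun r : ℝ => Real.sqrt (k + r^2))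
      (1 / (2 * Real.sqrt (k + r^2)) * (2*r)) r :=
    (Real.hasDerivAt_sqrt hne).comp r hq
  have hinv := (hs.const_mul 2).inv (by positivity)
  have heq : (fun r : ℝ => 1 / (2 * Real.sqrt (k + r^2)))
      = fun r : ℝ => (2 * Real.sqrt (k + r^2))⁻¹ := by
    funext s; rw [one_div]
  rw [heq]
  refine hinv.congr_deriv (Eq.symm ?_)
  rw [div_eq_div_iff (by positivity) (by positivity)]
  generalize hg : Real.sqrt (k + r^2) = ρ at hρ ⊢
  field_simp

lemma deriv2_eq {f h : ℝ → ℝ} {U : Set ℝ} (hU : IsOpen U) {a : ℝ} (ha : a ∈ U)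
    (H : ∀ s ∈ U, HasDerivAt f (h s) s) :
    deriv (fun s => deriv f s) a = deriv h a := by
  have hev : (fun s => deriv f s) =ᶠ[nhds a] h := by
    filter_upwards [hU.mem_nhds ha] with s hs using (H s hs).deriv
  exact hev.deriv_eq

/-- The first coordinate of the inverse of the parabolic coordinate map,
`g(x₁,x₂,x₃) = (1/2) ln(√(x₁² + x₂² + x₃²) + x₃)`. -/
noncomputable def gPar (x : Fin 3 → ℝ) : ℝ :=
  (1 / 2) * Real.log (Real.sqrt ((x 0) ^ 2 + (x 1) ^ 2 + (x 2) ^ 2) + x 2)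

/-- `gPar` is harmonic on the open set `{x : x₁² + x₂² > 0}`: it is twice differentiable
there and the sum of its three unmixed second partial derivatives vanishes there. -/
theorem gPar_harmonic :
    ContDiffOn ℝ 2 gPar {x : Fin 3 → ℝ | (x 0) ^ 2 + (x 1) ^ 2 > 0} ∧
    ∀ x : Fin 3 → ℝ, (x 0) ^ 2 + (x 1) ^ 2 > 0 →
      ∑ j : Fin 3,
        deriv (fun s => deriv (fun r => gPar (Function.update x j r)) s) (x j) = 0 := by
  constructor
  · intro x hx
    apply ContDiffAt.contDiffWithinAt
    have h0 : ContDiff ℝ 2 (fun x : Fin 3 → ℝ => x 0) :=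
      (ContinuousLinearMap.proj 0 : (Fin 3 → ℝ) →L[ℝ] ℝ).contDiff
    have h1 : ContDiff ℝ 2 (fun x : Fin 3 → ℝ => x 1) :=
      (ContinuousLinearMap.proj 1 : (Fin 3 → ℝ) →L[ℝ] ℝ).contDiff
    have h2 : ContDiff ℝ 2 (fun x : Fin 3 → ℝ => x 2) :=
      (ContinuousLinearMap.proj 2 : (Fin 3 → ℝ) →L[ℝ] ℝ).contDiff
    have hq : ContDiff ℝ 2 (fun x : Fin 3 → ℝ => (x 0)^2 + (x 1)^2 + (x 2)^2) :=
      ((h0.pow 2).add (h1.pow 2)).add (h2.pow 2)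
    have hxx : (x 0)^2 + (x 1)^2 > 0 := hx
    have hne : (x 0)^2 + (x 1)^2 + (x 2)^2 ≠ 0 := by nlinarith [sq_nonneg (x 2)]
    have hs : ContDiffAt ℝ 2 (fun x : Fin 3 → ℝ => Real.sqrt ((x 0)^2 + (x 1)^2 + (x 2)^2)) x :=
      (Real.contDiffAt_sqrt hne).comp x hq.contDiffAt
    have hsum := hs.add h2.contDiffAt
    have hpos : Real.sqrt ((x 0)^2 + (x 1)^2 + (x 2)^2) + x 2 > 0 :=
      rho_add_pos (m := (x 1)^2) (c := x 2) hxx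
    have hlog := hsum.log hpos.ne'
    exact (contDiffAt_const (c := (1:ℝ)/2)).mul hlog
  · intro x hx
    have hx1 : (x 1)^2 + (x 0)^2 > 0 := by linarith
    set a := x 0 with ha'
    set b := x 1 with hb'
    set c := x 2 with hc'
    have e0 : (fun r => gPar (Function.update x 0 r))
        = fun r => (1/2) * Real.log (Real.sqrt (r^2 + b^2 + c^2) + c) := by
      funext r; simp [gPar, Function.update, hb', hc']
    have e1 : (fun r => gPar (Function.update x 1 r))
        = fun r => (1/2) * Real.log (Real.sqrt (r^2 + a^2 + c^2) + c) := by
      funext r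
      have h02 : Function.update x 1 r 0 = a := by simp [Function.update, ha']
      have h12 : Function.update x 1 r 1 = r := by simp [Function.update]
      have h22 : Function.update x 1 r 2 = c := by simp [Function.update, hc']
      rw [gPar, h02, h12, h22, show a^2 + r^2 + c^2 = r^2 + a^2 + c^2 by ring]
    have e2 : (fun r => gPar (Function.update x 2 r))
        = fun r => (1/2) * Real.log (Real.sqrt (a^2 + b^2 + r^2) + r) := by
      funext r; simp [gPar, Function.update, ha', hb']
    set R := Real.sqrt (a^2 + b^2 + c^2) with hR'
    have hR2 : R^2 = a^2 + b^2 + c^2 := Real.sq_sqrt (by nlinarith [sq_nonneg c])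
    have hRpos : 0 < R := rho_pos (m := b^2) (c := c) hx
    have hRc : 0 < R + c := rho_add_pos (m := b^2) (c := c) hx
    have D0 : deriv (fun s => deriv (fun r => gPar (Function.update x 0 r)) s) a
        = (2 * R^2 * (R + c) - 2 * a^2 * (2 * R + c)) / (R * (2 * R * (R + c))^2) := by
      rw [e0]
      have hU : IsOpen {r : ℝ | r^2 + b^2 > 0} :=
        isOpen_lt continuous_const (by fun_prop)
      rw [deriv2_eq hU (show a ∈ {r : ℝ | r^2 + b^2 > 0} from hx)
        (fun s hs => hd1 s hs)]
      exact (hd2 a hx).deriv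
    have D1 : deriv (fun s => deriv (fun r => gPar (Function.update x 1 r)) s) b
        = (2 * R^2 * (R + c) - 2 * b^2 * (2 * R + c)) / (R * (2 * R * (R + c))^2) := by
      rw [e1]
      have hU : IsOpen {r : ℝ | r^2 + a^2 > 0} :=
        isOpen_lt continuous_const (by fun_prop)
      rw [deriv2_eq hU (show b ∈ {r : ℝ | r^2 + a^2 > 0} from hx1)
        (fun s hs => hd1 s hs)]
      have := (hd2 (c := c) b hx1).deriv
      rw [show b^2 + a^2 + c^2 = a^2 + b^2 + c^2 by ring] at this
      exact this
    have D2 : deriv (fun s => deriv (fun r => gPar (Function.update x 2 r)) s) c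
        = -(c / R^3) / 2 := by
      rw [e2]
      have hder : (fun s => deriv (fun r => (1/2) * Real.log (Real.sqrt (a^2 + b^2 + r^2) + r)) s)
          = fun s => 1 / (2 * Real.sqrt (a^2 + b^2 + s^2)) := by
        funext s; exact (hd1c s hx).deriv
      rw [hder]
      exact (hd2c c hx).deriv
    rw [Fin.sum_univ_three]
    show deriv _ a + deriv _ b + deriv _ c = 0
    rw [D0, D1, D2]
    have hkey : a^2 = R^2 - c^2 - b^2 := by linarith
    rw [hkey]
    field_simp
    ring
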